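/- Let K ≥ 2 and μ = (μ_1,…,μ_K) ∈ ℒ^K with m(μ_1) > max_{j≠1} m(μ_j) and f(|m(μ_j)|) < B for all j. Let 𝒜 = {ν ∈ ℒ^K : m(ν_1) ≤ max_{i≠1} m(ν_i)}. Then for every t = (t_1,…,t_K) in the probability simplex Σ_K, inf_{ν∈𝒜} Σ_{a=1}^K t_a·KL(μ_a,ν_a) = min_{j≥2} inf_{x ∈ [m(μ_j), m(μ_1)]} ( t_1·KL_inf(μ_1,x) + t_j·KL_inf(μ_j,x) ). -/

import Mathlib

open MeasureTheory Filter Set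
open scoped ENNReal NNReal Classical

/-- Kullback–Leibler divergence between two measures on ℝ, valued in `ℝ≥0∞`
(`∞` if `η` is not absolutely continuous w.r.t. `κ` or the log-likelihood ratio
is not integrable under `η`). -/
noncomputable def KL (η κ : Measure ℝ) : ℝ≥0∞ :=
  if η ≪ κ ∧ Integrable (llr η κ) η then ENNReal.ofReal (∫ y, llr η κ y ∂η) else ⊤

/-- The mean of a measure on ℝ. -/
noncomputable def meanM (η : Measure ℝ) : ℝ := ∫ y, y ∂η

/-- Membership in the class `ℒ`: Borel probability measures on ℝ with `E[f(|X|)] ≤ B`. -/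
def inL (f : ℝ → ℝ) (B : ℝ) (κ : Measure ℝ) : Prop :=
  IsProbabilityMeasure κ ∧ (∫⁻ y, ENNReal.ofReal (f |y|) ∂κ) ≤ ENNReal.ofReal B

/-- `KL_inf(η, x)`: the infimum of `KL(η, κ)` over `κ ∈ ℒ` with `m(κ) ≥ x` when
`x ≥ m(η)`, and over `κ ∈ ℒ` with `m(κ) ≤ x` when `x < m(η)`. -/
noncomputable def KLinf (f : ℝ → ℝ) (B : ℝ) (η : Measure ℝ) (x : ℝ) : ℝ≥0∞ :=
  if meanM η ≤ x then
    ⨅ κ ∈ {κ : Measure ℝ | inL f B κ ∧ x ≤ meanM κ}, KL η κ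
  else
    ⨅ κ ∈ {κ : Measure ℝ | inL f B κ ∧ meanM κ ≤ x}, KL η κ


lemma llr_self_ae (η : Measure ℝ) [SigmaFinite η] : llr η η =ᵐ[η] 0 := by
  filter_upwards [Measure.rnDeriv_self η] with y hy
  simp [llr, hy]

lemma KL_self_eq_zero (η : Measure ℝ) [SigmaFinite η] : KL η η = 0 := by
  rw [KL, if_pos]
  · rw [integral_congr_ae (llr_self_ae η)]
    simp
  · exact ⟨Measure.AbsolutelyContinuous.rfl,
      (integrable_congr (llr_self_ae η)).mpr (integrable_zero _ _ _)⟩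

lemma meanM_dirac (x : ℝ) : meanM (Measure.dirac x) = x := by
  rw [meanM]
  exact integral_dirac (fun y => y) x

lemma inL_dirac {f : ℝ → ℝ} {B : ℝ} (hf_cont : ContinuousOn f (Set.Ici 0))
    (x : ℝ) (hx : f |x| ≤ B) : inL f B (Measure.dirac x) := by
  refine ⟨by infer_instance, ?_⟩
  have hm : Measurable fun y : ℝ => ENNReal.ofReal (f |y|) := by
    apply Measurable.ennreal_ofReal
    exact (hf_cont.comp_continuous continuous_abs (fun y => abs_nonneg y)).measurable
  rw [lintegral_dirac' _ hm]
  exact ENNReal.ofReal_le_ofReal hx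

lemma f_abs_lt {f : ℝ → ℝ} (hf_mono : StrictMonoOn f (Set.Ici 0)) {a b x B : ℝ}
    (ha : f |a| < B) (hb : f |b| < B) (hx : x ∈ Set.Icc a b) : f |x| < B := by
  have h1 : |x| ≤ max |a| |b| := abs_le_max_abs_abs hx.1 hx.2
  have hmono := hf_mono.monotoneOn
  have h2 : f |x| ≤ f (max |a| |b|) :=
    hmono (abs_nonneg x) (le_trans (abs_nonneg x) h1) h1
  rcases max_choice |a| |b| with h | h <;> rw [h] at h2 <;> linarith

/-- For `μ ∈ ℒ^K` with arm `0` having the strictly largest mean and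
`f(|m(μⱼ)|) < B` for all `j`, and for any `t` in the probability simplex, the inner
optimization of the lower-bound problem simplifies:
`inf_{ν ∈ 𝒜} ∑ₐ tₐ KL(μₐ, νₐ)
  = min_{j ≠ 0} inf_{x ∈ [m(μⱼ), m(μ₀)]} (t₀ KL_inf(μ₀, x) + tⱼ KL_inf(μⱼ, x))`. -/
theorem stmt_8 (f : ℝ → ℝ) (B : ℝ)
    (hf_mono : StrictMonoOn f (Set.Ici 0))
    (hf_cont : ContinuousOn f (Set.Ici 0))
    (hf_nonneg : ∀ y : ℝ, 0 ≤ y → 0 ≤ f y)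
    (hf_conv : StrictConvexOn ℝ (Set.Ici 0) f)
    (hf_growth : Tendsto (fun y : ℝ => f y / y) atTop atTop)
    (hB : 0 < B) (hf0B : f 0 < B)
    (K : ℕ) (hK : 2 ≤ K) (μ : Fin K → Measure ℝ)
    (hμ : ∀ i, inL f B (μ i))
    (hmB : ∀ i, f |meanM (μ i)| < B)
    (hbest : ∀ j : Fin K, j ≠ ⟨0, by omega⟩ → meanM (μ j) < meanM (μ ⟨0, by omega⟩))
    (t : Fin K → ℝ) (ht0 : ∀ i, 0 ≤ t i) (ht1 : ∑ i, t i = 1) :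
    (⨅ ν ∈ {ν : Fin K → Measure ℝ | (∀ i, inL f B (ν i)) ∧
        ∃ i : Fin K, i ≠ ⟨0, by omega⟩ ∧ meanM (ν ⟨0, by omega⟩) ≤ meanM (ν i)},
      ∑ a, ENNReal.ofReal (t a) * KL (μ a) (ν a)) =
    ⨅ j ∈ {j : Fin K | j ≠ ⟨0, by omega⟩},
      ⨅ x ∈ Set.Icc (meanM (μ j)) (meanM (μ ⟨0, by omega⟩)),
        (ENNReal.ofReal (t ⟨0, by omega⟩) * KLinf f B (μ ⟨0, by omega⟩) x +
          ENNReal.ofReal (t j) * KLinf f B (μ j) x) := by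
  have hK0 : 0 < K := by omega
  set z : Fin K := ⟨0, hK0⟩ with hzdef
  haveI : ∀ a, SigmaFinite (μ a) := fun a => by
    haveI := (hμ a).1; infer_instance
  apply le_antisymm
  · -- LHS ≤ RHS
    refine le_iInf₂ fun j hj => le_iInf₂ fun x hx => ?_
    simp only [Set.mem_setOf_eq] at hj
    replace hj : j ≠ z := hj
    obtain ⟨hx1, hx2⟩ := hx
    have hxB : f |x| < B := f_abs_lt hf_mono (hmB j) (hmB z) ⟨hx1, hx2⟩
    set A := KLinf f B (μ z) x with hA
    set C := KLinf f B (μ j) x with hC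
    apply ENNReal.le_of_forall_pos_le_add
    intro ε hε hfin
    have hfin0 : ENNReal.ofReal (t z) * A ≠ ⊤ :=
      (ENNReal.add_lt_top.mp hfin).1.ne
    have hfinj : ENNReal.ofReal (t j) * C ≠ ⊤ :=
      (ENNReal.add_lt_top.mp hfin).2.ne
    have hεhalf : (0 : ℝ≥0∞) < (ε : ℝ≥0∞) / 2 := by
      apply ENNReal.div_pos (by exact_mod_cast hε.ne') (by norm_num)
    -- choose κ₀
    have claim0 : ∃ κ₀ : Measure ℝ, inL f B κ₀ ∧ meanM κ₀ ≤ x ∧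
        ENNReal.ofReal (t z) * KL (μ z) κ₀ ≤ ENNReal.ofReal (t z) * A + (ε : ℝ≥0∞) / 2 := by
      by_cases hxe : meanM (μ z) ≤ x
      · refine ⟨μ z, hμ z, hxe, ?_⟩
        rw [KL_self_eq_zero, mul_zero]
        exact zero_le
      · by_cases ht : ENNReal.ofReal (t z) = 0
        · exact ⟨Measure.dirac x, inL_dirac hf_cont x hxB.le, (meanM_dirac x).le,
            by rw [ht, zero_mul, zero_mul]; exact zero_le⟩
        · have hAne : A ≠ ⊤ := by
            intro h
            rw [h, ENNReal.mul_top ht] at hfin0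
            exact hfin0 rfl
          set d : ℝ≥0∞ := (ε : ℝ≥0∞) / 2 / ENNReal.ofReal (t z) with hd
          have hdpos : 0 < d :=
            ENNReal.div_pos hεhalf.ne' ENNReal.ofReal_ne_top
          have hAlt : A < A + d := ENNReal.lt_add_right hAne hdpos.ne'
          have hbr : A = ⨅ κ ∈ {κ : Measure ℝ | inL f B κ ∧ meanM κ ≤ x}, KL (μ z) κ := by
            rw [hA, KLinf, if_neg hxe]
          have : ∃ κ ∈ {κ : Measure ℝ | inL f B κ ∧ meanM κ ≤ x}, KL (μ z) κ < A + d := by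
            by_contra hc
            push_neg at hc
            have : A + d ≤ A := (le_iInf₂ hc).trans hbr.ge
            exact absurd hAlt (not_lt.mpr this)
          obtain ⟨κ₀, hκ₀, hKL⟩ := this
          refine ⟨κ₀, hκ₀.1, hκ₀.2, ?_⟩
          calc ENNReal.ofReal (t z) * KL (μ z) κ₀
              ≤ ENNReal.ofReal (t z) * (A + d) := mul_le_mul_right hKL.le _
            _ = ENNReal.ofReal (t z) * A + ENNReal.ofReal (t z) * d := by rw [mul_add]
            _ ≤ ENNReal.ofReal (t z) * A + (ε : ℝ≥0∞) / 2 := by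
                gcongr
                exact ENNReal.mul_div_le
    have claimj : ∃ κj : Measure ℝ, inL f B κj ∧ x ≤ meanM κj ∧
        ENNReal.ofReal (t j) * KL (μ j) κj ≤ ENNReal.ofReal (t j) * C + (ε : ℝ≥0∞) / 2 := by
      by_cases ht : ENNReal.ofReal (t j) = 0
      · refine ⟨Measure.dirac (meanM (μ z)), inL_dirac hf_cont _ (hmB z).le, ?_, ?_⟩
        · rw [meanM_dirac]; exact hx2
        · rw [ht, zero_mul, zero_mul]; exact zero_le
      · have hCne : C ≠ ⊤ := by
          intro h
          rw [h, ENNReal.mul_top ht] at hfinj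
          exact hfinj rfl
        set d : ℝ≥0∞ := (ε : ℝ≥0∞) / 2 / ENNReal.ofReal (t j) with hd
        have hdpos : 0 < d :=
          ENNReal.div_pos hεhalf.ne' ENNReal.ofReal_ne_top
        have hClt : C < C + d := ENNReal.lt_add_right hCne hdpos.ne'
        have hbr : C = ⨅ κ ∈ {κ : Measure ℝ | inL f B κ ∧ x ≤ meanM κ}, KL (μ j) κ := by
          rw [hC, KLinf, if_pos hx1]
        have : ∃ κ ∈ {κ : Measure ℝ | inL f B κ ∧ x ≤ meanM κ}, KL (μ j) κ < C + d := by
          by_contra hc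
          push_neg at hc
          have : C + d ≤ C := (le_iInf₂ hc).trans hbr.ge
          exact absurd hClt (not_lt.mpr this)
        obtain ⟨κj, hκj, hKL⟩ := this
        refine ⟨κj, hκj.1, hκj.2, ?_⟩
        calc ENNReal.ofReal (t j) * KL (μ j) κj
            ≤ ENNReal.ofReal (t j) * (C + d) := mul_le_mul_right hKL.le _
          _ = ENNReal.ofReal (t j) * C + ENNReal.ofReal (t j) * d := by rw [mul_add]
          _ ≤ ENNReal.ofReal (t j) * C + (ε : ℝ≥0∞) / 2 := by
              gcongr
              exact ENNReal.mul_div_le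
    obtain ⟨κ₀, hκ₀L, hκ₀m, hκ₀KL⟩ := claim0
    obtain ⟨κj, hκjL, hκjm, hκjKL⟩ := claimj
    set ν : Fin K → Measure ℝ := fun a => if a = z then κ₀ else if a = j then κj else μ a with hν
    have hνz : ν z = κ₀ := by simp [hν]
    have hνj : ν j = κj := by simp [hν, hj]
    have hνmem : ν ∈ {ν : Fin K → Measure ℝ | (∀ i, inL f B (ν i)) ∧
        ∃ i : Fin K, i ≠ z ∧ meanM (ν z) ≤ meanM (ν i)} := by
      refine ⟨fun a => ?_, j, hj, ?_⟩
      · by_cases h1 : a = z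
        · rw [h1, hνz]; exact hκ₀L
        · by_cases h2 : a = j
          · rw [h2, hνj]; exact hκjL
          · simp only [hν, if_neg h1, if_neg h2]; exact hμ a
      · rw [hνz, hνj]; exact le_trans hκ₀m hκjm
    have hsum : ∑ a, ENNReal.ofReal (t a) * KL (μ a) (ν a)
        = ENNReal.ofReal (t z) * KL (μ z) κ₀ + ENNReal.ofReal (t j) * KL (μ j) κj := by
      rw [← Finset.sum_subset (Finset.subset_univ ({z, j} : Finset (Fin K)))]
      · rw [Finset.sum_pair (Ne.symm hj), hνz, hνj]
      · intro a _ ha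
        simp only [Finset.mem_insert, Finset.mem_singleton, not_or] at ha
        have : ν a = μ a := by simp only [hν, if_neg ha.1, if_neg ha.2]
        rw [this, KL_self_eq_zero, mul_zero]
    calc (⨅ ν' ∈ {ν' : Fin K → Measure ℝ | (∀ i, inL f B (ν' i)) ∧
            ∃ i : Fin K, i ≠ z ∧ meanM (ν' z) ≤ meanM (ν' i)},
          ∑ a, ENNReal.ofReal (t a) * KL (μ a) (ν' a))
        ≤ ∑ a, ENNReal.ofReal (t a) * KL (μ a) (ν a) := iInf₂_le ν hνmem
      _ = ENNReal.ofReal (t z) * KL (μ z) κ₀ + ENNReal.ofReal (t j) * KL (μ j) κj := hsum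
      _ ≤ (ENNReal.ofReal (t z) * A + (ε : ℝ≥0∞) / 2)
            + (ENNReal.ofReal (t j) * C + (ε : ℝ≥0∞) / 2) := add_le_add hκ₀KL hκjKL
      _ = ENNReal.ofReal (t z) * A + ENNReal.ofReal (t j) * C + (ε : ℝ≥0∞) := by
          rw [add_add_add_comm, ENNReal.add_halves]
  · -- RHS ≤ LHS
    refine le_iInf₂ fun ν hν => ?_
    obtain ⟨hνL, i, hi, hm⟩ := hν
    replace hi : i ≠ z := hi
    set x : ℝ := max (meanM (μ i)) (min (meanM (ν i)) (meanM (μ z))) with hxdef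
    have hxIcc : x ∈ Set.Icc (meanM (μ i)) (meanM (μ z)) :=
      ⟨le_max_left _ _, max_le (hbest i hi).le (min_le_right _ _)⟩
    have h0 : KLinf f B (μ z) x ≤ KL (μ z) (ν z) := by
      by_cases hb : meanM (μ z) ≤ x
      · calc KLinf f B (μ z) x
            = ⨅ κ ∈ {κ : Measure ℝ | inL f B κ ∧ x ≤ meanM κ}, KL (μ z) κ := by
              rw [KLinf, if_pos hb]
          _ ≤ KL (μ z) (μ z) := iInf₂_le (μ z) ⟨hμ z, hxIcc.2⟩
          _ = 0 := KL_self_eq_zero _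
          _ ≤ _ := zero_le
      · push_neg at hb
        have hνi : meanM (ν i) ≤ x := by
          rcases min_choice (meanM (ν i)) (meanM (μ z)) with h | h
          · rw [← h]; exact le_max_right _ _
          · exfalso
            have h1 : min (meanM (ν i)) (meanM (μ z)) ≤ x := le_max_right _ _
            rw [h] at h1
            linarith
        rw [KLinf, if_neg (not_le.mpr hb)]
        exact iInf₂_le (ν z) ⟨hνL z, le_trans hm hνi⟩
    have hii : KLinf f B (μ i) x ≤ KL (μ i) (ν i) := by
      rw [KLinf, if_pos hxIcc.1]
      by_cases hc : x ≤ meanM (ν i)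
      · exact iInf₂_le (ν i) ⟨hνL i, hc⟩
      · push_neg at hc
        have hx_eq : x = meanM (μ i) := by
          rcases max_choice (meanM (μ i)) (min (meanM (ν i)) (meanM (μ z))) with h | h
          · exact h
          · exfalso
            have h1 : min (meanM (ν i)) (meanM (μ z)) ≤ meanM (ν i) := min_le_left _ _
            rw [← hxdef] at h
            linarith [h ▸ h1]
        calc (⨅ κ ∈ {κ : Measure ℝ | inL f B κ ∧ x ≤ meanM κ}, KL (μ i) κ)
            ≤ KL (μ i) (μ i) := iInf₂_le (μ i) ⟨hμ i, hx_eq.le⟩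
          _ = 0 := KL_self_eq_zero _
          _ ≤ _ := zero_le
    calc (⨅ j ∈ {j : Fin K | j ≠ z},
          ⨅ x' ∈ Set.Icc (meanM (μ j)) (meanM (μ z)),
            (ENNReal.ofReal (t z) * KLinf f B (μ z) x' +
              ENNReal.ofReal (t j) * KLinf f B (μ j) x'))
        ≤ ⨅ x' ∈ Set.Icc (meanM (μ i)) (meanM (μ z)),
            (ENNReal.ofReal (t z) * KLinf f B (μ z) x' +
              ENNReal.ofReal (t i) * KLinf f B (μ i) x') := iInf₂_le i hi
      _ ≤ ENNReal.ofReal (t z) * KLinf f B (μ z) x +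
            ENNReal.ofReal (t i) * KLinf f B (μ i) x := iInf₂_le x hxIcc
      _ ≤ ENNReal.ofReal (t z) * KL (μ z) (ν z) +
            ENNReal.ofReal (t i) * KL (μ i) (ν i) :=
          add_le_add (mul_le_mul_right h0 _) (mul_le_mul_right hii _)
      _ = ∑ a ∈ ({z, i} : Finset (Fin K)), ENNReal.ofReal (t a) * KL (μ a) (ν a) :=
          by rw [Finset.sum_pair (Ne.symm hi)]
      _ ≤ ∑ a, ENNReal.ofReal (t a) * KL (μ a) (ν a) :=
          Finset.sum_le_sum_of_subset (Finset.subset_univ _)
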